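/- Let a > 0, let x be real, and let w be real with 0 < |w| < 2a. Then ∫_{ℝ} exp(−s·w) / (cosh(a(s + x/2))·cosh(a(s − x/2))) ds = 2π·sinh(w·x/2) / (a·sin(π·w/(2a))·sinh(a·x)), provided x ≠ 0 (extended by continuity at x = 0). -/

import Mathlib

open MeasureTheory Real

open Set

lemma aux_int_rpow_exp {s b : ℝ} (hs : -1 < s) (hb : 0 < b) :
    IntegrableOn (fun u : ℝ => u ^ s * Real.exp (-(b * u))) (Ioi 0) := by
  have := integrableOn_rpow_mul_exp_neg_mul_rpow hs (one_pos : (0:ℝ) < 1) hb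
  simp_rw [Real.rpow_one, neg_mul] at this
  exact this

lemma aux_lint_exp {r : ℝ} (hr : 0 < r) :
    ∫⁻ t in Ioi 0, ENNReal.ofReal (Real.exp (-(r * t))) = ENNReal.ofReal (1 / r) := by
  have hi : IntegrableOn (fun t : ℝ => Real.exp (-(r * t))) (Ioi 0) := by
    simpa [neg_mul] using exp_neg_integrableOn_Ioi 0 hr
  rw [← ofReal_integral_eq_lintegral_ofReal hi
      (Filter.Eventually.of_forall fun t => (Real.exp_pos _).le)]
  congr 1
  have h := integral_rpow_mul_exp_neg_mul_Ioi one_pos hr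
  simpa [Real.Gamma_one] using h

lemma aux_lint_gamma {a r : ℝ} (ha : 0 < a) (hr : 0 < r) :
    ∫⁻ u in Ioi 0, ENNReal.ofReal (u ^ (a - 1) * Real.exp (-(r * u)))
      = ENNReal.ofReal ((1 / r) ^ a * Real.Gamma a) := by
  have hi : IntegrableOn (fun u : ℝ => u ^ (a - 1) * Real.exp (-(r * u))) (Ioi 0) :=
    aux_int_rpow_exp (by linarith) hr
  rw [← ofReal_integral_eq_lintegral_ofReal hi ?_]
  · rw [integral_rpow_mul_exp_neg_mul_Ioi ha hr]
  · filter_upwards [ae_restrict_mem measurableSet_Ioi] with u hu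
    exact mul_nonneg (Real.rpow_nonneg (le_of_lt hu) _) (Real.exp_pos _).le

lemma aux_key_lint {β c : ℝ} (hb1 : 0 < β) (hb2 : β < 1) (hc : 0 < c) :
    ∫⁻ u in Ioi 0, ENNReal.ofReal (u ^ (-β) / (u + c))
      = ENNReal.ofReal (Real.Gamma (1 - β) * ((1 / c) ^ β * Real.Gamma β)) := by
  have step1 : ∫⁻ u in Ioi 0, ENNReal.ofReal (u ^ (-β) / (u + c))
      = ∫⁻ u in Ioi 0, ∫⁻ t in Ioi 0,
          ENNReal.ofReal (u ^ (-β) * Real.exp (-((u + c) * t))) := by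
    refine setLIntegral_congr_fun measurableSet_Ioi ?_
    intro u hu
    have huc : 0 < u + c := by simp at hu; linarith
    calc ENNReal.ofReal (u ^ (-β) / (u + c))
        = ENNReal.ofReal (u ^ (-β)) * ENNReal.ofReal (1 / (u + c)) := by
          rw [← ENNReal.ofReal_mul (Real.rpow_nonneg (le_of_lt hu) _)]
          ring_nf
      _ = ENNReal.ofReal (u ^ (-β)) * ∫⁻ t in Ioi 0, ENNReal.ofReal (Real.exp (-((u+c) * t))) := by
          rw [aux_lint_exp huc]
      _ = ∫⁻ t in Ioi 0, ENNReal.ofReal (u ^ (-β)) * ENNReal.ofReal (Real.exp (-((u+c) * t))) := by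
          rw [lintegral_const_mul' _ _ ENNReal.ofReal_ne_top]
      _ = _ := by
          congr 1; funext t
          rw [← ENNReal.ofReal_mul (Real.rpow_nonneg (le_of_lt hu) _)]
  have step2 : (∫⁻ u in Ioi 0, ∫⁻ t in Ioi 0,
        ENNReal.ofReal (u ^ (-β) * Real.exp (-((u + c) * t))))
      = ∫⁻ t in Ioi 0, ∫⁻ u in Ioi 0,
          ENNReal.ofReal (u ^ (-β) * Real.exp (-((u + c) * t))) := by
    apply lintegral_lintegral_swap
    apply Measurable.aemeasurable
    apply Measurable.ennreal_ofReal
    exact ((measurable_fst.pow_const _).mul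
      (((measurable_fst.add_const c).mul measurable_snd).neg.exp))
  have step3 : ∀ t ∈ Ioi (0:ℝ), (∫⁻ u in Ioi 0,
        ENNReal.ofReal (u ^ (-β) * Real.exp (-((u + c) * t))))
      = ENNReal.ofReal (Real.exp (-(c * t)) * ((1/t) ^ (1-β) * Real.Gamma (1-β))) := by
    intro t ht
    simp only [mem_Ioi] at ht
    have : ∀ u : ℝ, u ^ (-β) * Real.exp (-((u + c) * t))
        = Real.exp (-(c * t)) * (u ^ ((1 - β) - 1) * Real.exp (-(t * u))) := by
      intro u
      rw [show (1-β-1:ℝ) = -β by ring, show -((u+c)*t) = -(t*u) + -(c*t) by ring,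
        Real.exp_add]
      ring
    simp_rw [this, ENNReal.ofReal_mul (Real.exp_pos _).le,
      lintegral_const_mul' _ _ ENNReal.ofReal_ne_top,
      aux_lint_gamma (by linarith : (0:ℝ) < 1 - β) ht]
  rw [step1, step2, setLIntegral_congr_fun measurableSet_Ioi
    step3]
  have step4 : ∀ t ∈ Ioi (0:ℝ),
      ENNReal.ofReal (Real.exp (-(c * t)) * ((1/t) ^ (1-β) * Real.Gamma (1-β)))
      = ENNReal.ofReal (Real.Gamma (1-β)) * ENNReal.ofReal (t ^ (β - 1) * Real.exp (-(c * t))) := by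
    intro t ht
    simp only [mem_Ioi] at ht
    rw [← ENNReal.ofReal_mul (Real.Gamma_nonneg_of_nonneg (by linarith))]
    congr 1
    rw [one_div, ← Real.rpow_neg_one t, ← Real.rpow_mul (le_of_lt ht),
      show (-1:ℝ)*(1-β) = β-1 by ring]
    ring
  rw [setLIntegral_congr_fun measurableSet_Ioi step4,
    lintegral_const_mul' _ _ ENNReal.ofReal_ne_top,
    aux_lint_gamma hb1 hc,
    ← ENNReal.ofReal_mul (Real.Gamma_nonneg_of_nonneg (by linarith))]


lemma aux_nn {β c : ℝ} (hc : 0 < c) :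
    0 ≤ᵐ[volume.restrict (Ioi (0:ℝ))] fun u : ℝ => u ^ (-β) / (u + c) := by
  filter_upwards [ae_restrict_mem measurableSet_Ioi] with u hu
  have hu' : (0:ℝ) < u := hu
  positivity

lemma aux_meas {β c : ℝ} (hc : 0 < c) :
    AEStronglyMeasurable (fun u : ℝ => u ^ (-β) / (u + c)) (volume.restrict (Ioi 0)) := by
  refine (ContinuousOn.div ?_ ?_ ?_).aestronglyMeasurable measurableSet_Ioi
  · exact fun u hu =>
      (Real.continuousAt_rpow_const u (-β) (Or.inl (ne_of_gt hu))).continuousWithinAt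
  · exact (continuous_id.add continuous_const).continuousOn
  · intro u hu
    have hu' : (0:ℝ) < u := hu
    positivity

lemma aux_integrable_rpow_div {β c : ℝ} (hb1 : 0 < β) (hb2 : β < 1) (hc : 0 < c) :
    IntegrableOn (fun u : ℝ => u ^ (-β) / (u + c)) (Ioi 0) := by
  refine ⟨aux_meas hc, ?_⟩
  rw [hasFiniteIntegral_iff_ofReal (aux_nn hc)]
  rw [aux_key_lint hb1 hb2 hc]
  exact ENNReal.ofReal_lt_top

lemma aux_integral_rpow_div {β c : ℝ} (hb1 : 0 < β) (hb2 : β < 1) (hc : 0 < c) :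
    ∫ u in Ioi 0, u ^ (-β) / (u + c) = π * c ^ (-β) / Real.sin (π * β) := by
  have h := ofReal_integral_eq_lintegral_ofReal (aux_integrable_rpow_div hb1 hb2 hc) (aux_nn hc)
  rw [aux_key_lint hb1 hb2 hc] at h
  have hsin : 0 < Real.sin (π * β) := by
    apply Real.sin_pos_of_pos_of_lt_pi
    · positivity
    · calc π * β < π * 1 := by
            exact mul_lt_mul_of_pos_left hb2 Real.pi_pos
        _ = π := mul_one π
  have hG : Real.Gamma (1 - β) * ((1 / c) ^ β * Real.Gamma β)
      = π * c ^ (-β) / Real.sin (π * β) := by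
    have hr : Real.Gamma β * Real.Gamma (1 - β) = π / Real.sin (π * β) :=
      Real.Gamma_mul_Gamma_one_sub β
    have hcb : (1 / c) ^ β = c ^ (-β) := by
      rw [one_div, ← Real.rpow_neg_one c, ← Real.rpow_mul hc.le, neg_one_mul]
    rw [hcb]
    have h2 : Real.Gamma β * Real.Gamma (1 - β) * Real.sin (π * β) = π := by
      rw [hr]; field_simp
    rw [eq_div_iff hsin.ne']
    linear_combination c ^ (-β) * h2
  rw [hG] at h
  refine (ENNReal.ofReal_eq_ofReal_iff ?_ ?_).mp h
  · exact setIntegral_nonneg measurableSet_Ioi fun u hu => by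
      have hu' : (0:ℝ) < u := hu
      positivity
  · positivity


lemma aux_integral_pf {β p q : ℝ} (hb1 : 0 < β) (hb2 : β < 1) (hp : 0 < p) (hq : 0 < q)
    (hpq : p ≠ q) :
    ∫ u in Ioi 0, u ^ (-β) / ((u + p) * (u + q))
      = (π / Real.sin (π * β)) * ((q ^ (-β) - p ^ (-β)) / (p - q)) := by
  have hsin : 0 < Real.sin (π * β) := by
    apply Real.sin_pos_of_pos_of_lt_pi
    · positivity
    · calc π * β < π * 1 := mul_lt_mul_of_pos_left hb2 Real.pi_pos
        _ = π := mul_one π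
  have h3 : p - q ≠ 0 := sub_ne_zero.mpr hpq
  have key : ∀ u ∈ Ioi (0:ℝ), u ^ (-β) / ((u + p) * (u + q))
      = (p - q)⁻¹ * (u ^ (-β) / (u + q) - u ^ (-β) / (u + p)) := by
    intro u hu
    have hu' : (0:ℝ) < u := hu
    have h1 : u + p ≠ 0 := by positivity
    have h2 : u + q ≠ 0 := by positivity
    field_simp
    ring
  rw [setIntegral_congr_fun measurableSet_Ioi key, integral_const_mul,
    integral_sub (aux_integrable_rpow_div hb1 hb2 hq) (aux_integrable_rpow_div hb1 hb2 hp),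
    aux_integral_rpow_div hb1 hb2 hq, aux_integral_rpow_div hb1 hb2 hp]
  field_simp

lemma aux_main_pos (a x w : ℝ) (ha : 0 < a) (hx : x ≠ 0) (hw1 : 0 < w) (hw2 : w < 2 * a) :
    ∫ s : ℝ, Real.exp (-s * w) / (Real.cosh (a * (s + x / 2)) * Real.cosh (a * (s - x / 2)))
      = 2 * Real.pi * Real.sinh (w * x / 2) /
          (a * Real.sin (Real.pi * w / (2 * a)) * Real.sinh (a * x)) := by
  have ha' : (a : ℝ) ≠ 0 := ne_of_gt ha
  set β := w / (2 * a) with hβ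
  have hb1 : 0 < β := by positivity
  have hb2 : β < 1 := by rw [hβ, div_lt_one (by linarith)]; linarith
  set p := Real.exp (a * x) with hpdef
  set q := Real.exp (-(a * x)) with hqdef
  have hp : 0 < p := Real.exp_pos _
  have hq : 0 < q := Real.exp_pos _
  have hqp : q = p⁻¹ := by rw [hqdef, hpdef, Real.exp_neg]
  have hpq : p ≠ q := by
    intro h
    rw [hpdef, hqdef] at h
    have := Real.exp_injective h
    apply hx
    have hax : a * x = 0 := by linarith
    rcases mul_eq_zero.mp hax with h' | h'
    · exact absurd h' ha'
    · exact h'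
  -- substitution u = exp (2 a s)
  have hderiv : ∀ s ∈ (univ : Set ℝ), HasDerivWithinAt (fun s : ℝ => Real.exp (2 * a * s))
      (2 * a * Real.exp (2 * a * s)) univ s := by
    intro s _
    have h1 : HasDerivAt (fun s : ℝ => 2 * a * s) (2 * a) s := by
      simpa using (hasDerivAt_id s).const_mul (2 * a)
    have h2 : HasDerivAt (fun s : ℝ => Real.exp (2 * a * s))
        (Real.exp (2 * a * s) * (2 * a)) s := h1.exp
    have h3 : Real.exp (2 * a * s) * (2 * a) = 2 * a * Real.exp (2 * a * s) := by ring
    rw [h3] at h2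
    exact h2.hasDerivWithinAt
  have hinj : InjOn (fun s : ℝ => Real.exp (2 * a * s)) univ := by
    intro s _ t _ h
    have h2 := Real.exp_injective h
    have : (2 * a) * s = (2 * a) * t := h2
    exact mul_left_cancel₀ (by positivity) this
  have himg : (fun s : ℝ => Real.exp (2 * a * s)) '' univ = Ioi 0 := by
    rw [image_univ]
    have h1 : (fun s : ℝ => Real.exp (2 * a * s)) = Real.exp ∘ (fun s : ℝ => 2 * a * s) := rfl
    rw [h1, range_comp]
    have h2 : range (fun s : ℝ => 2 * a * s) = univ :=
      (mul_left_surjective₀ (show 2 * a ≠ 0 by positivity)).range_eq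
    rw [h2, image_univ, Real.range_exp]
  have hsub := integral_image_eq_integral_abs_deriv_smul MeasurableSet.univ hderiv hinj
      (fun u : ℝ => u ^ (-β) / ((u + p) * (u + q)))
  rw [himg, Measure.restrict_univ] at hsub
  -- pointwise identity
  have hpt : ∀ s : ℝ,
      Real.exp (-s * w) / (Real.cosh (a * (s + x / 2)) * Real.cosh (a * (s - x / 2)))
        = (2 / a) * (|2 * a * Real.exp (2 * a * s)| •
            ((fun u : ℝ => u ^ (-β) / ((u + p) * (u + q))) (Real.exp (2 * a * s)))) := by
    intro s
    have hcc : Real.cosh (a * (s + x / 2)) * Real.cosh (a * (s - x / 2))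
        = (Real.cosh (2 * a * s) + Real.cosh (a * x)) / 2 := by
      rw [show 2 * a * s = a * (s + x / 2) + a * (s - x / 2) by ring,
        show a * x = a * (s + x / 2) - a * (s - x / 2) by ring,
        Real.cosh_add, Real.cosh_sub]
      ring
    have hrw : (Real.exp (2 * a * s)) ^ (-β) = Real.exp (-s * w) := by
      rw [Real.rpow_def_of_pos (Real.exp_pos _), Real.log_exp]
      congr 1
      rw [hβ]
      field_simp
    have hu : (0:ℝ) < Real.exp (2 * a * s) := Real.exp_pos _
    have hbeta : ((fun u : ℝ => u ^ (-β) / ((u + p) * (u + q))) (Real.exp (2 * a * s)))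
        = Real.exp (2 * a * s) ^ (-β)
          / ((Real.exp (2 * a * s) + p) * (Real.exp (2 * a * s) + q)) := rfl
    rw [hbeta, smul_eq_mul, hcc, Real.cosh_eq (2 * a * s), Real.cosh_eq (a * x), hrw,
      abs_of_pos (by positivity : (0:ℝ) < 2 * a * Real.exp (2 * a * s)),
      Real.exp_neg (2 * a * s)]
    rw [← hpdef, ← hqdef, hqp]
    set u := Real.exp (2 * a * s)
    have h1 : u + p ≠ 0 := by positivity
    have h2 : u + p⁻¹ ≠ 0 := by positivity
    have h3 : (u + u⁻¹) / 2 + (p + p⁻¹) / 2 ≠ 0 := by positivity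
    field_simp
    ring
  calc ∫ s : ℝ, Real.exp (-s * w) / (Real.cosh (a * (s + x / 2)) * Real.cosh (a * (s - x / 2)))
      = ∫ s : ℝ, (2 / a) * (|2 * a * Real.exp (2 * a * s)| •
          ((fun u : ℝ => u ^ (-β) / ((u + p) * (u + q))) (Real.exp (2 * a * s)))) :=
        integral_congr_ae (Filter.Eventually.of_forall hpt)
    _ = (2 / a) * ∫ s : ℝ, |2 * a * Real.exp (2 * a * s)| •
          ((fun u : ℝ => u ^ (-β) / ((u + p) * (u + q))) (Real.exp (2 * a * s))) :=
        integral_const_mul _ _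
    _ = (2 / a) * ∫ u in Ioi (0:ℝ), u ^ (-β) / ((u + p) * (u + q)) := by rw [← hsub]
    _ = (2 / a) * ((π / Real.sin (π * β)) * ((q ^ (-β) - p ^ (-β)) / (p - q))) := by
        rw [aux_integral_pf hb1 hb2 hp hq hpq]
    _ = 2 * Real.pi * Real.sinh (w * x / 2) /
          (a * Real.sin (Real.pi * w / (2 * a)) * Real.sinh (a * x)) := by
        have e1 : q ^ (-β) = Real.exp (w * x / 2) := by
          rw [hqdef, Real.rpow_def_of_pos (Real.exp_pos _), Real.log_exp, hβ]
          congr 1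
          field_simp
        have e2 : p ^ (-β) = Real.exp (-(w * x / 2)) := by
          rw [hpdef, Real.rpow_def_of_pos (Real.exp_pos _), Real.log_exp, hβ]
          congr 1
          field_simp
        have e3 : q ^ (-β) - p ^ (-β) = 2 * Real.sinh (w * x / 2) := by
          rw [e1, e2, Real.sinh_eq]
          ring
        have e4 : p - q = 2 * Real.sinh (a * x) := by
          rw [hpdef, hqdef, Real.sinh_eq]
          ring
        have e5 : π * β = π * w / (2 * a) := by rw [hβ]; ring
        have hsinh : Real.sinh (a * x) ≠ 0 := by
          rw [ne_eq, Real.sinh_eq_zero]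
          exact mul_ne_zero ha' hx
        have hsin : Real.sin (π * w / (2 * a)) ≠ 0 := by
          have h0 : 0 < π * w / (2 * a) := by positivity
          have h1 : π * w / (2 * a) < π := by
            rw [div_lt_iff₀ (by linarith)]
            calc π * w < π * (2 * a) := by
                  exact mul_lt_mul_of_pos_left hw2 Real.pi_pos
              _ = π * (2 * a) := rfl
          exact ne_of_gt (Real.sin_pos_of_pos_of_lt_pi h0 h1)
        rw [e3, e4, e5]
        field_simp

/-- `∫ e^{-sw} ds / (cosh(a(s+x/2)) cosh(a(s−x/2))) = 2π sinh(wx/2)/(a sin(πw/2a) sinh(ax))`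
for `a > 0`, `x ≠ 0`, `0 < |w| < 2a`. -/
theorem integral_exp_inv_cosh_cosh (a x w : ℝ) (ha : 0 < a) (hx : x ≠ 0)
    (hw0 : 0 < |w|) (hw : |w| < 2 * a) :
    ∫ s : ℝ, Real.exp (-s * w) / (Real.cosh (a * (s + x / 2)) * Real.cosh (a * (s - x / 2)))
      = 2 * Real.pi * Real.sinh (w * x / 2) /
          (a * Real.sin (Real.pi * w / (2 * a)) * Real.sinh (a * x)) := by
  rcases lt_trichotomy w 0 with hneg | hzero | hpos
  · -- reduce to -w
    have h1 : 0 < -w := by linarith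
    have h2 : -w < 2 * a := by rwa [abs_of_neg hneg] at hw
    have key := aux_main_pos a x (-w) ha hx h1 h2
    have hflip : (∫ s : ℝ, Real.exp (-s * w) /
          (Real.cosh (a * (s + x / 2)) * Real.cosh (a * (s - x / 2))))
        = ∫ s : ℝ, Real.exp (-s * (-w)) /
          (Real.cosh (a * (s + x / 2)) * Real.cosh (a * (s - x / 2))) := by
      rw [← integral_neg_eq_self (fun s : ℝ => Real.exp (-s * w) /
          (Real.cosh (a * (s + x / 2)) * Real.cosh (a * (s - x / 2)))) volume]
      apply integral_congr_ae
      apply Filter.Eventually.of_forall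
      intro s
      simp only
      rw [show -(-s) * w = -s * (-w) by ring,
        show a * (-s + x / 2) = -(a * (s - x/2)) by ring,
        show a * (-s - x / 2) = -(a * (s + x/2)) by ring,
        Real.cosh_neg, Real.cosh_neg]
      ring
    rw [hflip, key,
      show -w * x / 2 = -(w * x / 2) by ring,
      show π * -w / (2 * a) = -(π * w / (2 * a)) by ring,
      Real.sinh_neg, Real.sin_neg]
    ring
  · exfalso; rw [hzero] at hw0; simp at hw0
  · exact aux_main_pos a x w ha hx hpos (by rwa [abs_of_pos hpos] at hw)
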